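/- Every critical point of the pseudo del Pezzo superpotential W(x₁,…,xₙ) = Σⱼ xⱼ + Σⱼ 1/xⱼ + Πⱼ xⱼ on (ℂ*)^n, with n even, is non-degenerate: the Hessian matrix of second partial derivatives is invertible at every critical point. -/

import Mathlib

/-- Partial derivative of `f` at `x` in the `i`-th coordinate direction. -/
noncomputable def pgrad {n : ℕ} (f : (Fin n → ℂ) → ℂ) (x : Fin n → ℂ)
    (i : Fin n) : ℂ :=
  fderiv ℂ f x (Pi.single i 1)

/-- Hessian matrix of second partial derivatives of `f` at `x`. -/
noncomputable def pHess {n : ℕ} (f : (Fin n → ℂ) → ℂ) (x : Fin n → ℂ) :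
    Matrix (Fin n) (Fin n) ℂ :=
  Matrix.of fun i j => fderiv ℂ (fun y => pgrad f y j) x (Pi.single i 1)

open Finset Matrix


lemma pgrad_W {n : ℕ} (W : (Fin n → ℂ) → ℂ)
    (hW : ∀ x, W x = (∑ j, x j) + (∑ j, (x j)⁻¹) + (∏ j, x j))
    (y : Fin n → ℂ) (hy : ∀ j, y j ≠ 0) (i : Fin n) :
    pgrad W y i = 1 - ((y i)^2)⁻¹ + ∏ k ∈ univ.erase i, y k := by
  have hfun : W = fun z => (∑ j, z j) + (∑ j, (z j)⁻¹) + (∏ j, z j) := funext hW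
  have hproj : ∀ (j : Fin n), HasFDerivAt (fun z : Fin n → ℂ => z j)
      (ContinuousLinearMap.proj j : (Fin n → ℂ) →L[ℂ] ℂ) y := fun j => by
    exact (ContinuousLinearMap.proj (R := ℂ) (φ := fun _ : Fin n => ℂ) j).hasFDerivAt
  have h1 : HasFDerivAt (fun z : Fin n → ℂ => ∑ j, z j)
      (∑ j, (ContinuousLinearMap.proj j : (Fin n → ℂ) →L[ℂ] ℂ)) y :=
    HasFDerivAt.fun_sum fun j _ => hproj j
  have h2 : HasFDerivAt (fun z : Fin n → ℂ => ∑ j, (z j)⁻¹)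
      (∑ j, (-((y j) ^ 2)⁻¹) • (ContinuousLinearMap.proj j : (Fin n → ℂ) →L[ℂ] ℂ)) y :=
    HasFDerivAt.fun_sum fun j _ =>
      (hasDerivAt_inv (hy j)).comp_hasFDerivAt y (hproj j)
  have h3 : HasFDerivAt (fun z : Fin n → ℂ => ∏ j, z j)
      (∑ j, (∏ k ∈ univ.erase j, y k) • (ContinuousLinearMap.proj j : (Fin n → ℂ) →L[ℂ] ℂ)) y :=
    HasFDerivAt.finset_prod fun j _ => hproj j
  have hD : HasFDerivAt W (((∑ j, (ContinuousLinearMap.proj j : (Fin n → ℂ) →L[ℂ] ℂ))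
      + ∑ j, (-((y j) ^ 2)⁻¹) • (ContinuousLinearMap.proj j : (Fin n → ℂ) →L[ℂ] ℂ))
      + ∑ j, (∏ k ∈ univ.erase j, y k) • (ContinuousLinearMap.proj j : (Fin n → ℂ) →L[ℂ] ℂ)) y := by
    rw [hfun]; exact (h1.add h2).add h3
  rw [pgrad, hD.fderiv]
  simp [ContinuousLinearMap.proj_apply, Pi.single_apply, mul_ite, Finset.sum_ite_eq']
  ring

lemma pHess_W {n : ℕ} (W : (Fin n → ℂ) → ℂ)
    (hW : ∀ x, W x = (∑ j, x j) + (∑ j, (x j)⁻¹) + (∏ j, x j))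
    (x : Fin n → ℂ) (hx : ∀ j, x j ≠ 0) (i j : Fin n) :
    pHess W x i j = if i = j then 2 * x j / ((x j)^2)^2
      else ∏ l ∈ (univ.erase j).erase i, x l := by
  have hproj : ∀ (j : Fin n) (y : Fin n → ℂ), HasFDerivAt (fun z : Fin n → ℂ => z j)
      (ContinuousLinearMap.proj j : (Fin n → ℂ) →L[ℂ] ℂ) y := fun j y => by
    exact (ContinuousLinearMap.proj (R := ℂ) (φ := fun _ : Fin n => ℂ) j).hasFDerivAt
  -- the function y ↦ pgrad W y j agrees with G near x
  have hU : IsOpen {y : Fin n → ℂ | ∀ k, y k ≠ 0} := by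
    have : {y : Fin n → ℂ | ∀ k, y k ≠ 0} = ⋂ k, (fun y : Fin n → ℂ => y k) ⁻¹' {0}ᶜ := by
      ext y; simp [Set.mem_iInter]
    rw [this]
    exact isOpen_iInter_of_finite fun k =>
      (isOpen_compl_singleton).preimage (continuous_apply k)
  have hmem : {y : Fin n → ℂ | ∀ k, y k ≠ 0} ∈ nhds x := hU.mem_nhds hx
  have hev : (fun y => pgrad W y j) =ᶠ[nhds x]
      (fun y => 1 - ((y j)^2)⁻¹ + ∏ k ∈ univ.erase j, y k) :=
    Filter.eventuallyEq_of_mem hmem fun y hy => pgrad_W W hW y hy j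
  have h2 : HasFDerivAt (fun y : Fin n → ℂ => ((y j)^2)⁻¹)
      ((-(2 * x j ^ 1) / ((x j)^2)^2) • (ContinuousLinearMap.proj j : (Fin n → ℂ) →L[ℂ] ℂ)) x :=
    by
      have h := ((hasDerivAt_pow 2 (x j)).inv (pow_ne_zero 2 (hx j)))
      have h' : HasDerivAt (fun y : ℂ => (y^2)⁻¹) (-(2 * x j ^ 1) / ((x j)^2)^2) (x j) := by
        have e : (-(2 * x j ^ 1) / ((x j)^2)^2) = (-(((2 : ℕ) : ℂ) * x j ^ (2 - 1)) / ((x j)^2)^2) := by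
          norm_num
        rw [e]; exact h
      exact HasDerivAt.comp_hasFDerivAt (f := fun z : Fin n → ℂ => z j) x h' (hproj j x)
  have h3 : HasFDerivAt (fun y : Fin n → ℂ => ∏ k ∈ univ.erase j, y k)
      (∑ k ∈ univ.erase j, (∏ l ∈ (univ.erase j).erase k, x l) •
        (ContinuousLinearMap.proj k : (Fin n → ℂ) →L[ℂ] ℂ)) x :=
    HasFDerivAt.finset_prod fun k _ => hproj k x
  have hG : HasFDerivAt (fun y : Fin n → ℂ => 1 - ((y j)^2)⁻¹ + ∏ k ∈ univ.erase j, y k)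
      (((0 : (Fin n → ℂ) →L[ℂ] ℂ) - (-(2 * x j ^ 1) / ((x j)^2)^2) •
          (ContinuousLinearMap.proj j : (Fin n → ℂ) →L[ℂ] ℂ))
        + ∑ k ∈ univ.erase j, (∏ l ∈ (univ.erase j).erase k, x l) •
          (ContinuousLinearMap.proj k : (Fin n → ℂ) →L[ℂ] ℂ)) x :=
    ((hasFDerivAt_const (1:ℂ) x).sub h2).add h3
  have : pHess W x i j = fderiv ℂ (fun y => 1 - ((y j)^2)⁻¹ + ∏ k ∈ univ.erase j, y k) x
      (Pi.single i 1) := by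
    rw [pHess]; simp only [Matrix.of_apply]
    rw [hev.fderiv_eq]
  rw [this, hG.fderiv]
  simp only [ContinuousLinearMap.add_apply, ContinuousLinearMap.sub_apply,
    ContinuousLinearMap.zero_apply, ContinuousLinearMap.smul_apply,
    ContinuousLinearMap.sum_apply, ContinuousLinearMap.proj_apply, smul_eq_mul,
    Pi.single_apply, mul_ite, mul_one, mul_zero]
  rw [Finset.sum_ite_eq' (univ.erase j) i]
  by_cases h : i = j
  · subst h; simp; ring
  · simp [h, Finset.mem_erase, Ne.symm h]

private lemma stmt16_F (n : ℕ)
    (x : Fin n → ℂ) (hx : ∀ i, x i ≠ 0)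
    (P : ℂ) (hP : P = ∏ k, x k)
    (E : ∀ i, x i ^ 2 + P * x i - 1 = 0) :
    ∀ i, 1 + x i ^ 2 ≠ 0 := by
  intro i hFi
  have h1 : x i ^ 2 = -1 := by linear_combination hFi
  have hPx : P * x i = 2 := by linear_combination E i - h1
  have hP2 : P ^ 2 = -4 := by
    have h4 : (P * x i) ^ 2 = 4 := by rw [hPx]; norm_num
    linear_combination P ^ 2 * h1 - h4
  have hPabs : ‖P‖ = 2 := by
    have h := congrArg (norm : ℂ → ℝ) hP2
    rw [norm_pow] at h
    have h4 : ‖(-4 : ℂ)‖ = 4 := by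
      rw [norm_neg]
      norm_num
    rw [h4] at h
    have hnn := norm_nonneg P
    nlinarith [h, hnn]
  have hall : ∀ j, x j = -P / 2 := by
    intro j
    have h4 : (x j + P / 2) ^ 2 = 0 := by linear_combination E j + hP2 / 4
    have h5 : x j + P / 2 = 0 := sq_eq_zero_iff.mp h4
    linear_combination h5
  have hPval : P = (-P / 2) ^ n := by
    calc P = ∏ k, x k := hP
      _ = ∏ _k : Fin n, (-P / 2) := Finset.prod_congr rfl (fun j _ => hall j)
      _ = (-P / 2) ^ n := by rw [Finset.prod_const, Finset.card_univ, Fintype.card_fin]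
  have habs2 : (2 : ℝ) = 1 := by
    have h := congrArg (norm : ℂ → ℝ) hPval
    rw [norm_pow, norm_div, norm_neg, hPabs] at h
    have : ‖(2 : ℂ)‖ = 2 := by norm_num
    rw [this] at h
    norm_num at h
  norm_num at habs2



private lemma stmt16_parity (n : ℕ) (hn : Even n) (hpos : 0 < n)
    (x : Fin n → ℂ) (hx : ∀ i, x i ≠ 0)
    (P : ℂ) (hP : P = ∏ k, x k)
    (E : ∀ i, x i ^ 2 + P * x i - 1 = 0)
    (F : ∀ i, 1 + x i ^ 2 ≠ 0)
    (hcontra : 1 + ∑ i, (1 - x i ^ 2) / (1 + x i ^ 2) = 0) : False := by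
  classical
  set i₀ : Fin n := ⟨0, hpos⟩ with hi₀
  set r : ℂ := x i₀ with hr
  set s : Fin n → ℂ := fun i => (1 - x i ^ 2) / (1 + x i ^ 2) with hs
  set σ : ℂ := (1 - r ^ 2) / (1 + r ^ 2) with hσdef
  have hrr' : r * (-r - P) = -1 := by linear_combination -(E i₀)
  have hroot : ∀ i, x i = r ∨ x i = -r - P := by
    intro i
    have h : (x i - r) * (x i - (-r - P)) = 0 := by linear_combination E i - E i₀
    rcases mul_eq_zero.mp h with h | h
    · exact Or.inl (sub_eq_zero.mp h)
    · exact Or.inr (sub_eq_zero.mp h)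
  set S : Finset (Fin n) := univ.filter (fun i => x i = r) with hS
  set k : ℕ := S.card with hk
  have hkn : k ≤ n := by
    simpa using (Finset.card_le_univ S)
  have hmemS : ∀ i, i ∈ S ↔ x i = r := by intro i; simp [hS]
  have hsS : ∀ i ∈ S, s i = σ := by
    intro i hi; simp only [hs, (hmemS i).mp hi, hσdef]
  have hsT : ∀ i ∈ Sᶜ, s i = -σ := by
    intro i hi
    have hxi : x i = -r - P := by
      rcases hroot i with h | h
      · exact absurd ((hmemS i).mpr h) (by simpa using hi)
      · exact h
    have hF : 1 + x i ^ 2 ≠ 0 := F i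
    rw [hxi] at hF
    have hFr : 1 + r ^ 2 ≠ 0 := F i₀
    simp only [hs, hxi, hσdef]
    field_simp
    linear_combination (2 - 2 * (r * (-r - P))) * hrr'
  have hsum : ∑ i, s i = (k : ℂ) * σ - ((n : ℂ) - k) * σ := by
    rw [← Finset.sum_add_sum_compl S s]
    rw [Finset.sum_congr rfl hsS, Finset.sum_congr rfl hsT]
    rw [Finset.sum_const, Finset.sum_const, Finset.card_compl]
    simp [Fintype.card_fin, ← hk, Nat.cast_sub hkn]
    ring
  -- main relation on ρ = r^2
  have hσmul : σ * (1 + r ^ 2) = 1 - r ^ 2 := div_mul_cancel₀ _ (F i₀)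
  have hρ : (1 + r ^ 2) + (2 * (k : ℂ) - n) * (1 - r ^ 2) = 0 := by
    have h0 : 1 + ((k : ℂ) * σ - ((n : ℂ) - k) * σ) = 0 := by rw [← hsum]; exact hcontra
    linear_combination (1 + r ^ 2) * h0 - (2 * (k : ℂ) - n) * hσmul
  -- product relation
  have hprodS : ∏ i ∈ S, x i = r ^ k := by
    rw [Finset.prod_congr rfl (fun i hi => (hmemS i).mp hi), Finset.prod_const]
  have hprodT : ∏ i ∈ Sᶜ, x i = (-r - P) ^ (n - k) := by
    rw [Finset.prod_congr rfl (fun i hi => by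
      rcases hroot i with h | h
      · exact absurd ((hmemS i).mpr h) (by simpa using hi)
      · exact h), Finset.prod_const, Finset.card_compl, Fintype.card_fin]
  have hPfact : r ^ k * (-r - P) ^ (n - k) = P := by
    rw [← hprodS, ← hprodT, Finset.prod_mul_prod_compl, hP]
  have hPr : P * r = 1 - r ^ 2 := by linear_combination E i₀
  -- key identity
  have step1 : r ^ (k + 1) * (-1 : ℂ) ^ (n - k) = (1 - r ^ 2) * r ^ (n - k) := by
    rw [← hrr', mul_pow]
    linear_combination (r * r ^ (n - k)) * hPfact + r ^ (n - k) * hPr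
  have hsq : ((-1 : ℂ) ^ (n - k)) ^ 2 = 1 := by
    rw [← pow_mul, mul_comm, pow_mul]; norm_num
  have h2 : (r ^ (k + 1)) ^ 2 = (1 - r ^ 2) ^ 2 * (r ^ (n - k)) ^ 2 := by
    have := congrArg (fun z : ℂ => z ^ 2) step1
    simp only [mul_pow] at this
    rw [hsq, mul_one] at this
    exact this
  have hkey : (r ^ 2) ^ (k + 1) = (1 - r ^ 2) ^ 2 * (r ^ 2) ^ (n - k) := by
    calc (r ^ 2) ^ (k + 1) = (r ^ (k + 1)) ^ 2 := by
          rw [← pow_mul, ← pow_mul, mul_comm]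
      _ = (1 - r ^ 2) ^ 2 * (r ^ (n - k)) ^ 2 := h2
      _ = (1 - r ^ 2) ^ 2 * (r ^ 2) ^ (n - k) := by
          rw [← pow_mul, ← pow_mul, mul_comm 2 (n - k)]
  -- pass to integers
  obtain ⟨t, ht⟩ := hn
  set a : ℤ := 2 * (k : ℤ) - n + 1 with ha
  set b : ℤ := 2 * (k : ℤ) - n - 1 with hb
  have hodda : Odd a := ⟨(k : ℤ) - t, by omega⟩
  have hoddb : Odd b := ⟨(k : ℤ) - t - 1, by omega⟩
  have hb0 : (b : ℂ) ≠ 0 := by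
    intro h
    have : b = 0 := by exact_mod_cast h
    rw [this] at hoddb
    exact (Int.not_odd_iff_even.mpr Even.zero) hoddb
  have hρab : r ^ 2 * (b : ℂ) = (a : ℂ) := by
    push_cast [ha, hb]
    linear_combination -hρ
  have h2b : (1 - r ^ 2) * (b : ℂ) = -2 := by
    have hba : (b : ℂ) - a = -2 := by push_cast [ha, hb]; ring
    linear_combination hba - hρab
  have e1 : (r ^ 2) ^ (k + 1) * (b : ℂ) ^ (k + 1) = (a : ℂ) ^ (k + 1) := by
    rw [← mul_pow, hρab]
  have e2 : (r ^ 2) ^ (n - k) * (b : ℂ) ^ (n - k) = (a : ℂ) ^ (n - k) := by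
    rw [← mul_pow, hρab]
  have e3 : (1 - r ^ 2) ^ 2 * (b : ℂ) ^ 2 = 4 := by
    rw [← mul_pow, h2b]; norm_num
  have hfin : (a : ℂ) ^ (k + 1) * (b : ℂ) ^ (n - k) * (b : ℂ) ^ 2
      = 4 * (b : ℂ) ^ (k + 1) * (a : ℂ) ^ (n - k) := by
    rw [← e1, ← e2, ← e3, hkey]; ring
  have hZ : a ^ (k + 1) * b ^ (n - k) * b ^ 2 = 4 * b ^ (k + 1) * a ^ (n - k) := by
    exact_mod_cast hfin
  have hodd : Odd (a ^ (k + 1) * b ^ (n - k) * b ^ 2) :=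
    ((hodda.pow).mul (hoddb.pow)).mul (hoddb.pow)
  rw [hZ] at hodd
  have heven : Even (4 * b ^ (k + 1) * a ^ (n - k)) :=
    ⟨2 * b ^ (k + 1) * a ^ (n - k), by ring⟩
  exact (Int.not_odd_iff_even.mpr heven) hodd



private lemma stmt16_det (n : ℕ) (x : Fin n → ℂ) (hx : ∀ i, x i ≠ 0)
    (P : ℂ)
    (E : ∀ i, x i ^ 2 + P * x i - 1 = 0)
    (F : ∀ i, 1 + x i ^ 2 ≠ 0)
    (H : Matrix (Fin n) (Fin n) ℂ)
    (hH : ∀ i j, H i j = if i = j then 2 * x j / ((x j) ^ 2) ^ 2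
      else P * (x i)⁻¹ * (x j)⁻¹)
    (hdet0 : 1 + ∑ i, (1 - x i ^ 2) / (1 + x i ^ 2) ≠ 0) :
    H.det ≠ 0 := by
  classical
  set d : Fin n → ℂ := fun i => (1 + x i ^ 2) / x i ^ 3 with hd
  set u : Fin n → ℂ := fun i => (x i)⁻¹ with hu
  set w : Fin n → ℂ := fun i => P * u i / d i with hw
  have hdz : ∀ i, d i ≠ 0 := fun i => div_ne_zero (F i) (pow_ne_zero _ (hx i))
  have hdw : ∀ i, d i * w i = P * u i := by
    intro i; rw [hw, mul_comm]; exact div_mul_cancel₀ _ (hdz i)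
  have hfact : H = Matrix.diagonal d * (1 + Matrix.replicateCol Unit w * Matrix.replicateRow Unit u) := by
    ext i j
    rw [Matrix.diagonal_mul]
    have hcr : ((1 + Matrix.replicateCol Unit w * Matrix.replicateRow Unit u : Matrix (Fin n) (Fin n) ℂ)) i j
        = (if i = j then 1 else 0) + w i * u j := by
      simp [Matrix.mul_apply, Matrix.one_apply]
    rw [hcr, hH]
    by_cases h : i = j
    · subst h
      rw [if_pos rfl, if_pos rfl, mul_add, mul_one, ← mul_assoc, hdw, hu, hd]
      field_simp [hx i]
      linear_combination (-1) * E i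
    · rw [if_neg h, if_neg h, mul_add, mul_zero, zero_add, ← mul_assoc, hdw, hu]
  have hdot : u ⬝ᵥ w = ∑ i, (1 - x i ^ 2) / (1 + x i ^ 2) := by
    rw [dotProduct]
    refine Finset.sum_congr rfl fun i _ => ?_
    rw [hw, mul_div_assoc', div_eq_div_iff (hdz i) (F i), hu, hd]
    field_simp [hx i]
    linear_combination (x i ^ 2 + 1) * E i
  have hdet : H.det = (∏ i, d i) * (1 + u ⬝ᵥ w) := by
    rw [hfact, Matrix.det_mul, Matrix.det_diagonal, Matrix.det_one_add_replicateCol_mul_replicateRow]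
  rw [hdet, hdot]
  exact mul_ne_zero (Finset.prod_ne_zero_iff.mpr fun i _ => hdz i) hdet0

/-- every critical point of the pseudo del Pezzo superpotential
`W(x) = Σ xⱼ + Σ 1/xⱼ + Π xⱼ` on `(ℂ*)^n`, `n` even positive,
is non-degenerate. -/
theorem stmt_16 (n : ℕ) (hn : Even n) (hpos : 0 < n)
    (W : (Fin n → ℂ) → ℂ)
    (hW : ∀ x, W x = (∑ j, x j) + (∑ j, (x j)⁻¹) + (∏ j, x j))
    (x : Fin n → ℂ) (hx : ∀ i, x i ≠ 0)
    (hcrit : ∀ i, pgrad W x i = 0) :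
    (pHess W x).det ≠ 0 := by
  classical
  set P : ℂ := ∏ k, x k with hP
  have E : ∀ i, x i ^ 2 + P * x i - 1 = 0 := by
    intro i
    have h := hcrit i
    rw [pgrad_W W hW x hx i] at h
    have hQ : x i * ∏ k ∈ univ.erase i, x k = P := Finset.mul_prod_erase univ x (mem_univ i)
    have hinv : x i ^ 2 * ((x i) ^ 2)⁻¹ = 1 := mul_inv_cancel₀ (pow_ne_zero 2 (hx i))
    linear_combination (x i ^ 2) * h - x i * hQ + hinv
  have F : ∀ i, 1 + x i ^ 2 ≠ 0 := stmt16_F n x hx P hP E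
  have hH : ∀ i j, pHess W x i j = if i = j then 2 * x j / ((x j) ^ 2) ^ 2
      else P * (x i)⁻¹ * (x j)⁻¹ := by
    intro i j
    rw [pHess_W W hW x hx i j]
    by_cases h : i = j
    · rw [if_pos h, if_pos h]
    · rw [if_neg h, if_neg h]
      have h1 : x j * ∏ l ∈ univ.erase j, x l = P := Finset.mul_prod_erase univ x (mem_univ j)
      have h2 : x i * ∏ l ∈ (univ.erase j).erase i, x l = ∏ l ∈ univ.erase j, x l :=
        Finset.mul_prod_erase _ x (Finset.mem_erase.mpr ⟨h, mem_univ i⟩)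
      have h3 : P = x i * x j * ∏ l ∈ (univ.erase j).erase i, x l := by
        rw [← h1, ← h2]; ring
      rw [h3]
      field_simp [hx i, hx j]
  have hdet0 : 1 + ∑ i, (1 - x i ^ 2) / (1 + x i ^ 2) ≠ 0 := fun hcontra =>
    stmt16_parity n hn hpos x hx P hP E F hcontra
  exact stmt16_det n x hx P E F (pHess W x) hH hdet0
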